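/- The simple graph G on vertex set {1,2,3,4,5,6,7} with edge set {{1,3},{1,4},{2,3},{2,4},{3,4},{3,5},{4,5},{4,6},{4,7},{5,6},{5,7},{6,7}} (graph number 924 in the Atlas of Graphs) has minimum rank 3 over the real numbers. -/

import Mathlib

/-- Edge list of graph number 924 in the Atlas of Graphs (vertices 1..7). -/
def atlas924Edges : List (ℕ × ℕ) := [(1,3),(1,4),(2,3),(2,4),(3,4),(3,5),(4,5),(4,6),(4,7),(5,6),(5,7),(6,7)]

@[simp]
lemma my_cons_val_five {α : Type*} {m : ℕ} (x : α) (u : Fin (m+5) → α) :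
    Matrix.vecCons x u 5 = Matrix.vecHead (Matrix.vecTail (Matrix.vecTail (Matrix.vecTail (Matrix.vecTail u)))) :=
  rfl

@[simp]
lemma my_cons_val_six {α : Type*} {m : ℕ} (x : α) (u : Fin (m+6) → α) :
    Matrix.vecCons x u 6 = Matrix.vecHead (Matrix.vecTail (Matrix.vecTail (Matrix.vecTail (Matrix.vecTail (Matrix.vecTail u))))) :=
  rfl

/-- Any matrix whose pattern contains the induced path 1-3-5-6 of graph 924
has rank at least 3. -/
lemma aux_rank_ge_three (A : Matrix (Fin 7) (Fin 7) ℝ)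
    (h02 : A 0 2 ≠ 0) (h24 : A 2 4 ≠ 0) (h45 : A 4 5 ≠ 0)
    (h04 : A 0 4 = 0) (h05 : A 0 5 = 0) (h25 : A 2 5 = 0) : 3 ≤ A.rank := by
  classical
  set P : Matrix (Fin 3) (Fin 7) ℝ := fun i k => if k = ![0,2,4] i then 1 else 0 with hP
  set Q : Matrix (Fin 7) (Fin 3) ℝ := fun k j => if k = ![2,4,5] j then 1 else 0 with hQ
  have hS : P * A * Q =
      !![A 0 2, A 0 4, A 0 5; A 2 2, A 2 4, A 2 5; A 4 2, A 4 4, A 4 5] := by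
    ext i j
    fin_cases i <;> fin_cases j <;>
      simp only [Matrix.mul_apply, Fin.sum_univ_succ] <;> simp [hP, hQ]
  have hdet : (P * A * Q).det ≠ 0 := by
    have : (P * A * Q).det = A 0 2 * (A 2 4 * A 4 5) := by
      rw [hS, Matrix.det_fin_three]
      simp [h04, h05, h25, mul_assoc]
    rw [this]
    exact mul_ne_zero h02 (mul_ne_zero h24 h45)
  have hrk : (P * A * Q).rank = 3 := by
    rw [Matrix.rank_of_isUnit _ ((Matrix.isUnit_iff_isUnit_det _).mpr hdet.isUnit)]
    simp
  calc (3 : ℕ) = (P * A * Q).rank := hrk.symm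
    _ ≤ (P * A).rank := Matrix.rank_mul_le_left _ _
    _ ≤ A.rank := Matrix.rank_mul_le_right _ _

set_option maxHeartbeats 2000000 in
/-- Graph number 924 in the Atlas of Graphs has minimum rank 3 over the reals:
3 is the least element of the set of ranks of real symmetric 7×7 matrices whose
off-diagonal zero/nonzero pattern matches the edges of the graph. -/
theorem atlas924_minRank_eq_three :
    IsLeast {r : ℕ | ∃ A : Matrix (Fin 7) (Fin 7) ℝ, A.IsSymm ∧
        (∀ i j : Fin 7, i ≠ j →
          (A i j ≠ 0 ↔
            ((i.val + 1, j.val + 1) ∈ atlas924Edges ∨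
             (j.val + 1, i.val + 1) ∈ atlas924Edges))) ∧
        A.rank = r} 3 := by
  constructor
  · -- membership: an explicit rank-3 matrix with the right pattern
    refine ⟨!![0,0,1,1,0,0,0; 0,0,1,1,0,0,0; 1,1,2,-2,-1,0,0; 1,1,-2,10,7,4,8;
        0,0,-1,7,4,2,4; 0,0,0,4,2,1,2; 0,0,0,8,4,2,4], ?_, ?_, ?_⟩
    · ext i j
      fin_cases i <;> fin_cases j <;> rfl
    · intro i j hij
      fin_cases i <;> fin_cases j <;> simp_all [atlas924Edges, Matrix.vecHead, Matrix.vecTail] <;> norm_num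
    · have hfact : (!![0,0,1,1,0,0,0; 0,0,1,1,0,0,0; 1,1,2,-2,-1,0,0; 1,1,-2,10,7,4,8;
          0,0,-1,7,4,2,4; 0,0,0,4,2,1,2; 0,0,0,8,4,2,4] : Matrix (Fin 7) (Fin 7) ℝ) =
          (!![1,0,1;1,0,1;1,-1,0;1,3,0;1,2,1;1,1,1;2,2,2] : Matrix (Fin 7) (Fin 3) ℝ) *
          (!![1,1,1,1,1,1,2;0,0,-1,3,2,1,2;-1,-1,0,0,-1,-1,-2] : Matrix (Fin 3) (Fin 7) ℝ) := by
        ext i j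
        fin_cases i <;> fin_cases j <;>
          simp [Matrix.mul_apply, Fin.sum_univ_three] <;> norm_num
      have hle : (!![0,0,1,1,0,0,0; 0,0,1,1,0,0,0; 1,1,2,-2,-1,0,0; 1,1,-2,10,7,4,8;
          0,0,-1,7,4,2,4; 0,0,0,4,2,1,2; 0,0,0,8,4,2,4] : Matrix (Fin 7) (Fin 7) ℝ).rank ≤ 3 := by
        rw [hfact]
        exact (Matrix.rank_mul_le_right _ _).trans
          ((Matrix.rank_le_card_height _).trans (by simp))
      have hge := aux_rank_ge_three
        (!![0,0,1,1,0,0,0; 0,0,1,1,0,0,0; 1,1,2,-2,-1,0,0; 1,1,-2,10,7,4,8;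
          0,0,-1,7,4,2,4; 0,0,0,4,2,1,2; 0,0,0,8,4,2,4]) (by simp) (by simp)
        (by simp) (by simp) (by simp) (by simp)
      omega
  · -- lower bound
    rintro r ⟨A, -, hpat, rfl⟩
    have h02 : A 0 2 ≠ 0 := (hpat 0 2 (by decide)).mpr (by decide)
    have h24 : A 2 4 ≠ 0 := (hpat 2 4 (by decide)).mpr (by decide)
    have h45 : A 4 5 ≠ 0 := (hpat 4 5 (by decide)).mpr (by decide)
    have h04 : A 0 4 = 0 := by
      by_contra h; have := (hpat 0 4 (by decide)).mp h; revert this; decide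
    have h05 : A 0 5 = 0 := by
      by_contra h; have := (hpat 0 5 (by decide)).mp h; revert this; decide
    have h25 : A 2 5 = 0 := by
      by_contra h; have := (hpat 2 5 (by decide)).mp h; revert this; decide
    exact aux_rank_ge_three A h02 h24 h45 h04 h05 h25
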